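/- Let $\mathbf{z}\in\mathbb{R}^C$ with $z_1 \geq \dots \geq z_C$, $\Delta z = z_1 - z_2$, $0 < T < 1$, and $M \in \{1,\dots,C-1\}$. If $\Delta z > \max\left\{\frac{T}{T-1}\ln(T/4), \frac{T}{T+1}\ln\left(\frac{4(C-1)^2}{T}\right)\right\}$, then $\frac{\partial}{\partial z_1} g(\mathbf{z};T,M) > 0$, where $g(\mathbf{z};T,M) = \frac{\sum_{i=1}^M e^{z_i}}{\sum_{j=1}^C e^{z_j}} - \frac{\sum_{i=1}^M e^{z_i/T}}{\sum_{j=1}^C e^{z_j/T}}$. -/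

import Mathlib

noncomputable def gap {C : ℕ} (z : Fin C → ℝ) (T : ℝ) (M : ℕ) : ℝ :=
  (∑ i ∈ Finset.univ.filter (fun i : Fin C => (i : ℕ) < M), Real.exp (z i)) /
      (∑ j, Real.exp (z j)) -
    (∑ i ∈ Finset.univ.filter (fun i : Fin C => (i : ℕ) < M), Real.exp (z i / T)) /
      (∑ j, Real.exp (z j / T))

private lemma key2_aux {T X u : ℝ} (hX4 : 4 < T * X) (hXu : 4 * u ^ 2 < T * X) :
    (1 + u) ^ 2 < T * X := by nlinarith [sq_nonneg (1 - u)]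

set_option maxHeartbeats 1000000 in
theorem stmt_10 {C : ℕ} (hC : 2 ≤ C) (z : Fin C → ℝ)
    (hz : ∀ i j : Fin C, i ≤ j → z j ≤ z i)
    (T : ℝ) (hT0 : 0 < T) (hT1 : T < 1) (M : ℕ) (hM1 : 1 ≤ M) (hM : M ≤ C - 1)
    (hΔ : z ⟨0, by omega⟩ - z ⟨1, by omega⟩ >
      max (T / (T - 1) * Real.log (T / 4))
        (T / (T + 1) * Real.log (4 * ((C : ℝ) - 1) ^ 2 / T))) :
    deriv (fun x => gap (Function.update z ⟨0, by omega⟩ x) T M) (z ⟨0, by omega⟩) > 0 := by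
  have hTne : T ≠ 0 := ne_of_gt hT0
  have hT1ne : T - 1 ≠ 0 := by intro h; nlinarith
  have h1Tne : 1 - T ≠ 0 := by intro h; nlinarith
  have hTp1ne : T + 1 ≠ 0 := by intro h; nlinarith
  haveI : Nonempty (Fin C) := ⟨⟨0, by omega⟩⟩
  set i0 : Fin C := ⟨0, by omega⟩ with hi0def
  set i1 : Fin C := ⟨1, by omega⟩ with hi1def
  show deriv (fun x => gap (Function.update z i0 x) T M) (z i0) > 0
  have hΔ' : z i0 - z i1 >
      max (T / (T - 1) * Real.log (T / 4))
        (T / (T + 1) * Real.log (4 * ((C : ℝ) - 1) ^ 2 / T)) := hΔ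
  set x₀ : ℝ := z i0 with hx0def
  set top : Finset (Fin C) := Finset.univ.filter (fun i : Fin C => (i : ℕ) < M)
    with htopdef
  set bot : Finset (Fin C) := Finset.univ.filter (fun i : Fin C => ¬ (i : ℕ) < M)
    with hbotdef
  have hi0top : i0 ∈ top := by
    rw [htopdef, Finset.mem_filter]
    exact ⟨Finset.mem_univ _, by simp [hi0def]; omega⟩
  have hupd0 : Function.update z i0 x₀ = z := Function.update_eq_self i0 z
  -- derivatives of individual terms
  have hd1 : ∀ i : Fin C, HasDerivAt (fun x => Real.exp (Function.update z i0 x i))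
      (if i = i0 then Real.exp x₀ else 0) x₀ := by
    intro i
    rcases eq_or_ne i i0 with h | h
    · simp only [if_pos h]
      have he : (fun x => Real.exp (Function.update z i0 x i)) = Real.exp := by
        funext x; rw [h, Function.update_self]
      rw [he]; exact Real.hasDerivAt_exp x₀
    · simp only [if_neg h]
      have he : (fun x => Real.exp (Function.update z i0 x i))
          = fun _ => Real.exp (z i) := by
        funext x; rw [Function.update_of_ne h]
      rw [he]; exact hasDerivAt_const _ _
  have hd2 : ∀ i : Fin C, HasDerivAt (fun x => Real.exp (Function.update z i0 x i / T))
      (if i = i0 then Real.exp (x₀ / T) * (1 / T) else 0) x₀ := by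
    intro i
    rcases eq_or_ne i i0 with h | h
    · simp only [if_pos h]
      have he : (fun x => Real.exp (Function.update z i0 x i / T))
          = fun x => Real.exp (x / T) := by
        funext x; rw [h, Function.update_self]
      rw [he]
      exact (Real.hasDerivAt_exp (x₀ / T)).comp x₀ ((hasDerivAt_id x₀).div_const T)
    · simp only [if_neg h]
      have he : (fun x => Real.exp (Function.update z i0 x i / T))
          = fun _ => Real.exp (z i / T) := by
        funext x; rw [Function.update_of_ne h]
      rw [he]; exact hasDerivAt_const _ _
  have hN1 : HasDerivAt (fun x => ∑ i ∈ top, Real.exp (Function.update z i0 x i))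
      (Real.exp x₀) x₀ := by
    have h := HasDerivAt.fun_sum (fun i (_ : i ∈ top) => hd1 i)
    rwa [Finset.sum_ite_eq' top i0, if_pos hi0top] at h
  have hD1 : HasDerivAt (fun x => ∑ j, Real.exp (Function.update z i0 x j))
      (Real.exp x₀) x₀ := by
    have h := HasDerivAt.fun_sum (fun i (_ : i ∈ Finset.univ) => hd1 i)
    rwa [Finset.sum_ite_eq' Finset.univ i0, if_pos (Finset.mem_univ i0)] at h
  have hN2 : HasDerivAt (fun x => ∑ i ∈ top, Real.exp (Function.update z i0 x i / T))
      (Real.exp (x₀ / T) * (1 / T)) x₀ := by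
    have h := HasDerivAt.fun_sum (fun i (_ : i ∈ top) => hd2 i)
    rwa [Finset.sum_ite_eq' top i0, if_pos hi0top] at h
  have hD2 : HasDerivAt (fun x => ∑ j, Real.exp (Function.update z i0 x j / T))
      (Real.exp (x₀ / T) * (1 / T)) x₀ := by
    have h := HasDerivAt.fun_sum (fun i (_ : i ∈ Finset.univ) => hd2 i)
    rwa [Finset.sum_ite_eq' Finset.univ i0, if_pos (Finset.mem_univ i0)] at h
  have hD1ne : (∑ j, Real.exp (Function.update z i0 x₀ j)) ≠ 0 := by
    rw [hupd0]
    exact ne_of_gt (Finset.sum_pos (fun j _ => Real.exp_pos _) Finset.univ_nonempty)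
  have hD2ne : (∑ j, Real.exp (Function.update z i0 x₀ j / T)) ≠ 0 := by
    rw [hupd0]
    exact ne_of_gt (Finset.sum_pos (fun j _ => Real.exp_pos _) Finset.univ_nonempty)
  have hQ1 := hN1.fun_div hD1 hD1ne
  have hQ2 := hN2.fun_div hD2 hD2ne
  have hF := hQ1.fun_sub hQ2
  have hFg : HasDerivAt (fun x => gap (Function.update z i0 x) T M)
      ((Real.exp x₀ * (∑ j, Real.exp (Function.update z i0 x₀ j)) -
          (∑ i ∈ top, Real.exp (Function.update z i0 x₀ i)) * Real.exp x₀) /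
          (∑ j, Real.exp (Function.update z i0 x₀ j)) ^ 2 -
        (Real.exp (x₀ / T) * (1 / T) * (∑ j, Real.exp (Function.update z i0 x₀ j / T)) -
          (∑ i ∈ top, Real.exp (Function.update z i0 x₀ i / T)) *
            (Real.exp (x₀ / T) * (1 / T))) /
          (∑ j, Real.exp (Function.update z i0 x₀ j / T)) ^ 2) x₀ := by
    simpa only [gap, htopdef] using hF
  rw [hFg.deriv, hupd0]
  -- abbreviations
  set A : ℝ := ∑ i ∈ top, Real.exp (z i) with hAdef
  set S : ℝ := ∑ j, Real.exp (z j) with hSdef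
  set AT : ℝ := ∑ i ∈ top, Real.exp (z i / T) with hATdef
  set ST : ℝ := ∑ j, Real.exp (z j / T) with hSTdef
  set B : ℝ := ∑ i ∈ bot, Real.exp (z i) with hBdef
  set BT : ℝ := ∑ i ∈ bot, Real.exp (z i / T) with hBTdef
  have hSA : A + B = S := Finset.sum_filter_add_sum_filter_not _ _ _
  have hSTAT : AT + BT = ST := Finset.sum_filter_add_sum_filter_not _ _ _
  have hSpos : 0 < S :=
    Finset.sum_pos (fun j _ => Real.exp_pos _) Finset.univ_nonempty
  have hSTpos : 0 < ST :=
    Finset.sum_pos (fun j _ => Real.exp_pos _) Finset.univ_nonempty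
  have hbotne : bot.Nonempty := by
    refine ⟨⟨C - 1, by omega⟩, ?_⟩
    rw [hbotdef, Finset.mem_filter]
    exact ⟨Finset.mem_univ _, by simp; omega⟩
  have hBpos : 0 < B := Finset.sum_pos (fun j _ => Real.exp_pos _) hbotne
  have hBTpos : 0 < BT := Finset.sum_pos (fun j _ => Real.exp_pos _) hbotne
  have hnum1 : Real.exp x₀ * S - A * Real.exp x₀ = Real.exp x₀ * B := by
    rw [← hSA]; ring
  have hnum2 : Real.exp (x₀ / T) * (1 / T) * ST - AT * (Real.exp (x₀ / T) * (1 / T))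
      = Real.exp (x₀ / T) * (1 / T) * BT := by
    rw [← hSTAT]; ring
  rw [hnum1, hnum2, gt_iff_lt, sub_pos, div_lt_div_iff₀ (pow_pos hSTpos 2) (pow_pos hSpos 2)]
  -- now: exp(x₀/T) * (1/T) * BT * S^2 < exp x₀ * B * ST^2
  have hinvT : (1 : ℝ) ≤ 1 / T := by rw [le_div_iff₀ hT0]; linarith
  have hz1 : ∀ i : Fin C, i ∈ bot → z i ≤ z i1 := by
    intro i hi
    rw [hbotdef, Finset.mem_filter] at hi
    apply hz
    rw [hi1def, Fin.le_def]
    simp only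
    omega
  set w : ℝ := z i1 * (1 / T - 1) with hwdef
  have hBT_le : BT ≤ Real.exp w * B := by
    rw [hBdef, hBTdef, Finset.mul_sum]
    apply Finset.sum_le_sum
    intro i hi
    rw [← Real.exp_add]
    apply Real.exp_le_exp.mpr
    have h1 : z i / T = z i * (1 / T - 1) + z i := by ring
    rw [h1]
    have h2 : z i * (1 / T - 1) ≤ w := by
      rw [hwdef]
      exact mul_le_mul_of_nonneg_right (hz1 i hi) (by linarith)
    linarith
  have hS_le : S ≤ Real.exp x₀ + ((C : ℝ) - 1) * Real.exp (z i1) := by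
    rw [hSdef, ← Finset.add_sum_erase _ _ (Finset.mem_univ i0)]
    rw [hx0def]
    gcongr
    calc ∑ i ∈ Finset.univ.erase i0, Real.exp (z i)
        ≤ (Finset.univ.erase i0).card • Real.exp (z i1) := by
          apply Finset.sum_le_card_nsmul
          intro i hi
          apply Real.exp_le_exp.mpr
          apply hz
          rw [hi1def, Fin.le_def]
          simp only
          have := Finset.ne_of_mem_erase hi
          have : (i : ℕ) ≠ 0 := by
            intro h0
            apply this
            rw [hi0def]
            exact Fin.ext h0
          omega
      _ = ((C : ℝ) - 1) * Real.exp (z i1) := by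
          rw [Finset.card_erase_of_mem (Finset.mem_univ i0), Finset.card_univ,
            Fintype.card_fin, nsmul_eq_mul, Nat.cast_sub (by omega), Nat.cast_one]
  have hST_ge : Real.exp (x₀ / T) ≤ ST := by
    rw [hSTdef, hx0def]
    exact Finset.single_le_sum (f := fun j => Real.exp (z j / T))
      (fun j _ => (Real.exp_pos _).le) (Finset.mem_univ i0)
  -- scalar key inequality
  clear_value A S AT ST B BT
  set Δ : ℝ := x₀ - z i1 with hΔdef
  set u : ℝ := ((C : ℝ) - 1) * Real.exp (z i1 - x₀) with hudef
  clear_value Δ u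
  have hC1 : (1 : ℝ) ≤ (C : ℝ) - 1 := by
    have : (2 : ℝ) ≤ (C : ℝ) := by exact_mod_cast hC
    linarith
  have hupos : 0 < u := by
    rw [hudef]; positivity
  have h1 : T / (T - 1) * Real.log (T / 4) < Δ :=
    lt_of_le_of_lt (le_max_left _ _) hΔ'
  have h2 : T / (T + 1) * Real.log (4 * ((C : ℝ) - 1) ^ 2 / T) < Δ :=
    lt_of_le_of_lt (le_max_right _ _) hΔ'
  have E1 : 4 < T * Real.exp (Δ * (1 / T - 1)) := by
    have hlog : Real.log (T / 4) = -Real.log (4 / T) := by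
      rw [← Real.log_inv]
      congr 1
      rw [inv_div]
    have h1T : 0 < 1 - T := by linarith
    have heq : T / (T - 1) * Real.log (T / 4) = T / (1 - T) * Real.log (4 / T) := by
      rw [hlog, show T - 1 = -(1 - T) by ring, div_neg]
      ring
    rw [heq] at h1
    have h1' : Real.log (4 / T) < Δ * ((1 - T) / T) := by
      have := (mul_lt_mul_of_pos_right h1 (show (0:ℝ) < (1 - T) / T by positivity))
      calc Real.log (4 / T) = T / (1 - T) * Real.log (4 / T) * ((1 - T) / T) := by
            field_simp
        _ < Δ * ((1 - T) / T) := this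
    have h4T : (0 : ℝ) < 4 / T := by positivity
    have := Real.exp_lt_exp.mpr h1'
    rw [Real.exp_log h4T] at this
    have heq2 : Δ * ((1 - T) / T) = Δ * (1 / T - 1) := by
      rw [sub_div, div_self hTne]
    rw [heq2] at this
    calc (4 : ℝ) = T * (4 / T) := by field_simp
      _ < T * Real.exp (Δ * (1 / T - 1)) := by
          exact mul_lt_mul_of_pos_left this hT0
  have E2 : 4 * ((C : ℝ) - 1) ^ 2 < T * Real.exp (Δ * (1 / T + 1)) := by
    have hT1' : 0 < T + 1 := by linarith
    have h2' : Real.log (4 * ((C : ℝ) - 1) ^ 2 / T) < Δ * ((T + 1) / T) := by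
      have := (mul_lt_mul_of_pos_right h2 (show (0:ℝ) < (T + 1) / T by positivity))
      calc Real.log (4 * ((C : ℝ) - 1) ^ 2 / T)
          = T / (T + 1) * Real.log (4 * ((C : ℝ) - 1) ^ 2 / T) * ((T + 1) / T) := by
            field_simp
        _ < Δ * ((T + 1) / T) := this
    have hpos : (0 : ℝ) < 4 * ((C : ℝ) - 1) ^ 2 / T := by positivity
    have := Real.exp_lt_exp.mpr h2'
    rw [Real.exp_log hpos] at this
    have heq2 : Δ * ((T + 1) / T) = Δ * (1 / T + 1) := by
      rw [add_div, div_self hTne, add_comm (1:ℝ) (1/T)]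
    rw [heq2] at this
    calc 4 * ((C : ℝ) - 1) ^ 2 = T * (4 * ((C : ℝ) - 1) ^ 2 / T) := by field_simp
      _ < T * Real.exp (Δ * (1 / T + 1)) := mul_lt_mul_of_pos_left this hT0
  have hv : (0 : ℝ) < Real.exp (z i1 - x₀) := Real.exp_pos _
  have hid : Real.exp (Δ * (1 / T + 1)) * Real.exp (z i1 - x₀) ^ 2
      = Real.exp (Δ * (1 / T - 1)) := by
    rw [sq, ← Real.exp_add, ← Real.exp_add]
    congr 1
    rw [hΔdef]
    ring
  have E2' : 4 * u ^ 2 < T * Real.exp (Δ * (1 / T - 1)) := by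
    calc 4 * u ^ 2 = 4 * ((C : ℝ) - 1) ^ 2 * Real.exp (z i1 - x₀) ^ 2 := by
          rw [hudef]; ring
      _ < T * Real.exp (Δ * (1 / T + 1)) * Real.exp (z i1 - x₀) ^ 2 := by
          exact mul_lt_mul_of_pos_right E2 (by positivity)
      _ = T * Real.exp (Δ * (1 / T - 1)) := by rw [← hid]; ring
  have key2 : (1 + u) ^ 2 < T * Real.exp (Δ * (1 / T - 1)) := key2_aux E1 E2'
  have hPe : Real.exp x₀ + ((C : ℝ) - 1) * Real.exp (z i1) = Real.exp x₀ * (1 + u) := by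
    have h2 : Real.exp (z i1 - x₀) * Real.exp x₀ = Real.exp (z i1) := by
      rw [← Real.exp_add]; congr 1; ring
    rw [hudef, ← h2]; ring
  have h5 : Real.exp (x₀ / T) * Real.exp w * Real.exp x₀ ^ 2 * Real.exp (Δ * (1 / T - 1))
      = Real.exp x₀ * Real.exp (x₀ / T) ^ 2 := by
    have hsum : x₀ / T + w + x₀ + x₀ + Δ * (1 / T - 1) = x₀ + x₀ / T + x₀ / T := by
      rw [hwdef, hΔdef]; ring
    calc Real.exp (x₀ / T) * Real.exp w * Real.exp x₀ ^ 2 * Real.exp (Δ * (1 / T - 1))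
        = Real.exp (x₀ / T + w + x₀ + x₀ + Δ * (1 / T - 1)) := by
          rw [Real.exp_add, Real.exp_add, Real.exp_add, Real.exp_add]; ring
      _ = Real.exp (x₀ + x₀ / T + x₀ / T) := by rw [hsum]
      _ = Real.exp x₀ * Real.exp (x₀ / T) ^ 2 := by
          rw [Real.exp_add, Real.exp_add]; ring
  have key : Real.exp (x₀ / T) * (1 / T) * (Real.exp w * B) *
      (Real.exp x₀ + ((C : ℝ) - 1) * Real.exp (z i1)) ^ 2
      < Real.exp x₀ * B * Real.exp (x₀ / T) ^ 2 := by
    rw [hPe]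
    calc Real.exp (x₀ / T) * (1 / T) * (Real.exp w * B) * (Real.exp x₀ * (1 + u)) ^ 2
        = (Real.exp (x₀ / T) * Real.exp w * Real.exp x₀ ^ 2 * B * (1 / T)) *
            (1 + u) ^ 2 := by ring
      _ < (Real.exp (x₀ / T) * Real.exp w * Real.exp x₀ ^ 2 * B * (1 / T)) *
            (T * Real.exp (Δ * (1 / T - 1))) := by
          exact mul_lt_mul_of_pos_left key2 (by positivity)
      _ = (Real.exp (x₀ / T) * Real.exp w * Real.exp x₀ ^ 2 * Real.exp (Δ * (1 / T - 1)))
            * B * (1 / T * T) := by ring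
      _ = Real.exp x₀ * B * Real.exp (x₀ / T) ^ 2 := by
          rw [h5, one_div_mul_cancel hTne, mul_one]
          ring
  calc Real.exp (x₀ / T) * (1 / T) * BT * S ^ 2
      ≤ Real.exp (x₀ / T) * (1 / T) * (Real.exp w * B) *
          (Real.exp x₀ + ((C : ℝ) - 1) * Real.exp (z i1)) ^ 2 := by
        have h0 : 0 ≤ Real.exp (x₀ / T) * (1 / T) := by positivity
        have hS0 : (0 : ℝ) ≤ S := hSpos.le
        gcongr
      _ < Real.exp x₀ * B * Real.exp (x₀ / T) ^ 2 := key
      _ ≤ Real.exp x₀ * B * ST ^ 2 := by gcongr
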